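/- Every real symmetric matrix A admits a symmetric best rank one approximation: there exists a unit vector v and scalar λ (an eigenvalue of A of maximal absolute value) such that ‖A − λ v vᵀ‖_F ≤ ‖A − s x yᵀ‖_F for all scalars s and unit vectors x, y. -/

import Mathlib

noncomputable section

open RealInnerProductSpace

/-- Frobenius norm of a real matrix. -/
def frob {m k : ℕ} (A : Matrix (Fin m) (Fin k) ℝ) : ℝ :=
  Real.sqrt (∑ i, ∑ j, A i j ^ 2)

/-- `v` is a unit vector. -/
def uvec {m : ℕ} (v : Fin m → ℝ) : Prop := ∑ i, v i ^ 2 = 1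

lemma sum_sq_expand {m : ℕ} (A : Matrix (Fin m) (Fin m) ℝ) (s : ℝ) (x y : Fin m → ℝ) :
    ∑ i, ∑ j, (A i j - s * (x i * y j)) ^ 2
      = (∑ i, ∑ j, A i j ^ 2) - 2 * s * (∑ i, ∑ j, x i * A i j * y j)
        + s ^ 2 * ((∑ i, x i ^ 2) * (∑ j, y j ^ 2)) := by
  have h : ∀ i j, (A i j - s * (x i * y j)) ^ 2
      = A i j ^ 2 - 2 * s * (x i * A i j * y j) + s ^ 2 * (x i ^ 2 * y j ^ 2) := by
    intros; ring
  simp_rw [h, Finset.sum_add_distrib, Finset.sum_sub_distrib, ← Finset.mul_sum,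
    ← Finset.sum_mul]

lemma bilin_eq_inner {m : ℕ} (A : Matrix (Fin m) (Fin m) ℝ) (x y : EuclideanSpace ℝ (Fin m)) :
    ∑ i, ∑ j, x i * A i j * y j
      = ⟪x, (show EuclideanSpace ℝ (Fin m) from WithLp.toLp 2 (A.mulVec (show Fin m → ℝ from y)))⟫ := by
  simp only [PiLp.inner_apply, RCLike.inner_apply, conj_trivial, Matrix.mulVec,
    dotProduct, Finset.mul_sum, Finset.sum_mul, PiLp.toLp_apply]
  exact Finset.sum_congr rfl fun i _ => Finset.sum_congr rfl fun j _ => by ring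




lemma bilin_bound {m : ℕ} (A : Matrix (Fin (m+1)) (Fin (m+1)) ℝ) (hA : A.IsHermitian)
    (lam : ℝ) (hmax : ∀ j, |hA.eigenvalues j| ≤ |lam|) (x y : Fin (m+1) → ℝ)
    (hx : ∑ i, x i ^ 2 = 1) (hy : ∑ i, y i ^ 2 = 1) :
    |∑ i, ∑ j, x i * A i j * y j| ≤ |lam| := by
  set b := hA.eigenvectorBasis with hb
  set x' : EuclideanSpace ℝ (Fin (m+1)) := WithLp.toLp 2 x with hx'
  set y' : EuclideanSpace ℝ (Fin (m+1)) := WithLp.toLp 2 y with hy'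
  have hinner : ∀ u w : EuclideanSpace ℝ (Fin (m+1)), ⟪u, w⟫ = ∑ i, u i * w i := by
    intro u w
    simp [PiLp.inner_apply, RCLike.inner_apply, conj_trivial, mul_comm]
  have hAe : ∀ i j, A j i = A i j := by
    intro i j
    have := congrFun (congrFun hA i) j
    simpa [Matrix.conjTranspose_apply] using this
  set Ay : EuclideanSpace ℝ (Fin (m+1)) := WithLp.toLp 2 (A.mulVec y) with hAy
  have hT : ∑ i, ∑ j, x i * A i j * y j = ⟪x', Ay⟫ := by
    rw [hinner]
    simp only [hAy, hx', Matrix.mulVec, dotProduct, Finset.mul_sum, PiLp.toLp_apply]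
    exact Finset.sum_congr rfl fun i _ => Finset.sum_congr rfl fun j _ => by ring
  have hsymA : ∀ k, ⟪b k, Ay⟫ = hA.eigenvalues k * ⟪b k, y'⟫ := by
    intro k
    have h2 : (A.mulVec (b k) : Fin (m+1) → ℝ) = hA.eigenvalues k • (b k : Fin (m+1) → ℝ) :=
      hA.mulVec_eigenvectorBasis k
    have h1 : ⟪b k, Ay⟫ = ∑ i, (A.mulVec (b k)) i * y i := by
      rw [hinner]
      simp only [hAy, Matrix.mulVec, dotProduct, Finset.mul_sum, Finset.sum_mul, PiLp.toLp_apply]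
      rw [Finset.sum_comm]
      refine Finset.sum_congr rfl fun i _ => Finset.sum_congr rfl fun j _ => ?_
      rw [hAe i j]; ring
    rw [h1, h2, hinner]
    simp [Finset.mul_sum, mul_assoc, Pi.smul_apply, smul_eq_mul, hy']
  have hexp : ⟪x', Ay⟫ = ∑ k, ⟪x', b k⟫ * (hA.eigenvalues k * ⟪b k, y'⟫) := by
    rw [← b.sum_inner_mul_inner x' Ay]
    exact Finset.sum_congr rfl fun k _ => by rw [hsymA k]
  have hpar : ∀ (u : EuclideanSpace ℝ (Fin (m+1))), (∑ i, u i ^ 2 = 1) →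
      ∑ k, ⟪u, b k⟫ ^ 2 = 1 := by
    intro u hu
    have h := b.sum_inner_mul_inner u u
    rw [hinner] at h
    simp_rw [real_inner_comm u] at h
    calc ∑ k, ⟪u, b k⟫ ^ 2 = ∑ i, u i * u i := by simp_rw [sq]; exact h
      _ = 1 := by rw [← hu]; exact Finset.sum_congr rfl fun i _ => (sq (u i)).symm
  have hpx := hpar x' hx
  have hpy := hpar y' hy
  -- Cauchy-Schwarz
  set c : Fin (m+1) → ℝ := fun k => |⟪x', b k⟫| with hc
  set d : Fin (m+1) → ℝ := fun k => |⟪b k, y'⟫| with hd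
  have hcs : (∑ k, c k * d k) ^ 2 ≤ 1 := by
    have h := Finset.sum_mul_sq_le_sq_mul_sq Finset.univ c d
    have h1 : ∑ k, c k ^ 2 = 1 := by
      rw [← hpx]; exact Finset.sum_congr rfl fun k _ => by simp [hc, sq_abs]
    have h2 : ∑ k, d k ^ 2 = 1 := by
      rw [← hpy]
      refine Finset.sum_congr rfl fun k _ => by
        simp [hd, sq_abs, real_inner_comm, mul_comm]
    rw [h1, h2] at h; simpa using h
  have hSnn : 0 ≤ ∑ k, c k * d k :=
    Finset.sum_nonneg fun k _ => mul_nonneg (abs_nonneg _) (abs_nonneg _)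
  have hS1 : ∑ k, c k * d k ≤ 1 := by nlinarith
  rw [hT, hexp]
  calc |∑ k, ⟪x', b k⟫ * (hA.eigenvalues k * ⟪b k, y'⟫)|
      ≤ ∑ k, |⟪x', b k⟫ * (hA.eigenvalues k * ⟪b k, y'⟫)| :=
        Finset.abs_sum_le_sum_abs _ _
    _ ≤ ∑ k, |lam| * (c k * d k) := by
        refine Finset.sum_le_sum fun k _ => ?_
        rw [abs_mul, abs_mul]
        have := hmax k
        have h1 : (0:ℝ) ≤ c k := abs_nonneg _
        have h2 : (0:ℝ) ≤ d k := abs_nonneg _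
        calc |⟪x', b k⟫| * (|hA.eigenvalues k| * |⟪b k, y'⟫|)
            ≤ |⟪x', b k⟫| * (|lam| * |⟪b k, y'⟫|) := by
              apply mul_le_mul_of_nonneg_left _ h1
              exact mul_le_mul_of_nonneg_right this h2
          _ = |lam| * (c k * d k) := by ring
    _ = |lam| * ∑ k, c k * d k := by rw [Finset.mul_sum]
    _ ≤ |lam| * 1 := mul_le_mul_of_nonneg_left hS1 (abs_nonneg _)
    _ = |lam| := mul_one _
/-- Every real symmetric matrix admits a symmetric best rank one approximation `λ v vᵀ`,
where `λ` is an eigenvalue of `A` of maximal absolute value and `v` a unit eigenvector. -/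
theorem stmt1 {n : ℕ} (A : Matrix (Fin (n + 1)) (Fin (n + 1)) ℝ) (hA : A.IsHermitian) :
    ∃ (lam : ℝ) (v : Fin (n + 1) → ℝ), uvec v ∧
      (∃ i, lam = hA.eigenvalues i) ∧ (∀ j, |hA.eigenvalues j| ≤ |lam|) ∧
      A.mulVec v = lam • v ∧
      ∀ (s : ℝ) (x y : Fin (n + 1) → ℝ), uvec x → uvec y →
        frob (A - lam • Matrix.vecMulVec v v) ≤ frob (A - s • Matrix.vecMulVec x y) := by
  obtain ⟨i, hi⟩ := Finite.exists_max (fun j => |hA.eigenvalues j|)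
  set lam := hA.eigenvalues i with hlam
  set v : Fin (n + 1) → ℝ := ⇑(hA.eigenvectorBasis i) with hv
  have hvu : uvec v := by
    have h := hA.eigenvectorBasis.orthonormal.1 i
    have h2 : ⟪(hA.eigenvectorBasis i : EuclideanSpace ℝ (Fin (n+1))),
        hA.eigenvectorBasis i⟫ = 1 := by
      rw [real_inner_self_eq_norm_mul_norm, h]; norm_num
    have h3 : ∑ k, v k * v k = 1 := by
      rw [← h2]
      simp only [PiLp.inner_apply, RCLike.inner_apply, conj_trivial, hv]
    unfold uvec
    simp_rw [sq]; exact h3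
  have hmv : A.mulVec v = lam • v := hA.mulVec_eigenvectorBasis i
  refine ⟨lam, v, hvu, ⟨i, rfl⟩, hi, hmv, ?_⟩
  intro s x y hx hy
  have hTvv : ∑ i, ∑ j, v i * A i j * v j = lam := by
    calc ∑ i, ∑ j, v i * A i j * v j = ∑ k, v k * (A.mulVec v) k := by
          refine Finset.sum_congr rfl fun k _ => ?_
          simp only [Matrix.mulVec, dotProduct, Finset.mul_sum]
          exact Finset.sum_congr rfl fun j _ => by ring
      _ = ∑ k, lam * (v k * v k) := by
          rw [hmv]; exact Finset.sum_congr rfl fun k _ => by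
            simp [Pi.smul_apply, smul_eq_mul]; ring
      _ = lam := by
          rw [← Finset.mul_sum]
          have : ∑ k, v k * v k = 1 := by simp_rw [← sq]; exact hvu
          rw [this, mul_one]
  have hTxy := bilin_bound A hA lam hi x y hx hy
  set t := ∑ i, ∑ j, x i * A i j * y j with ht
  have ht2 : t ^ 2 ≤ lam ^ 2 := by
    have := pow_le_pow_left₀ (abs_nonneg t) hTxy 2
    rwa [sq_abs, sq_abs] at this
  unfold frob
  apply Real.sqrt_le_sqrt
  have e1 : ∀ i j, (A - lam • Matrix.vecMulVec v v) i j = A i j - lam * (v i * v j) := by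
    intro i j
    simp [Matrix.sub_apply, Matrix.smul_apply, Matrix.vecMulVec_apply, smul_eq_mul]
  have e2 : ∀ i j, (A - s • Matrix.vecMulVec x y) i j = A i j - s * (x i * y j) := by
    intro i j
    simp [Matrix.sub_apply, Matrix.smul_apply, Matrix.vecMulVec_apply, smul_eq_mul]
  simp_rw [e1, e2]
  rw [sum_sq_expand A lam v v, sum_sq_expand A s x y, hTvv, hvu, hx, hy]
  nlinarith [sq_nonneg (s - t)]
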